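/- Let Ĝ be the spectral-extremal gem-free graph as above. If S ⊆ N_+(û) is such that every u ∈ S has x_u < (1−β)x_û and d_{N(û)}(u) ≥ 2 for some 0 < β < 1, then 0 < e(N_+(û)) − |N_+(û)| + 2 − β·Σ_{u∈S}(d_{N(û)}(u) − 1). -/

import Mathlib

open scoped Classical
open SimpleGraph Matrix

def ContainsCopy {α β : Type*} (H : SimpleGraph α) (G : SimpleGraph β) : Prop :=
  ∃ f : α ↪ β, ∀ a b, H.Adj a b → G.Adj (f a) (f b)

def gem : SimpleGraph (Fin 5) :=
  SimpleGraph.fromRel (fun a b => (b.val = a.val + 1 ∧ b.val ≤ 3) ∨ b = 4)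

def bookS (k : ℕ) : SimpleGraph (Fin 2 ⊕ Fin k) :=
  SimpleGraph.fromRel (fun a _ => a.isLeft = true)

def pendantS (s t : ℕ) : SimpleGraph (Fin 2 ⊕ (Fin s ⊕ Fin t)) :=
  SimpleGraph.fromRel (fun a b =>
    match a, b with
    | Sum.inl _, Sum.inl _ => True
    | Sum.inl _, Sum.inr (Sum.inl _) => True
    | Sum.inl i, Sum.inr (Sum.inr _) => i = 0
    | _, _ => False)

def starG (r : ℕ) : SimpleGraph (Fin (r + 1)) :=
  SimpleGraph.fromRel (fun a _ => a = 0)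

noncomputable def specRad {V : Type*} [Fintype V] (G : SimpleGraph V) : ℝ :=
  sSup {μ : ℝ | Module.End.HasEigenvalue (Matrix.mulVecLin (G.adjMatrix ℝ)) μ}

noncomputable def edgeCount {V : Type*} [Fintype V] (G : SimpleGraph V) : ℕ :=
  G.edgeFinset.card

noncomputable def edgesIn {V : Type*} [Fintype V] (G : SimpleGraph V) (S : Finset V) : ℕ :=
  (G.edgeFinset.filter (fun e => ∀ v ∈ e, v ∈ S)).card

noncomputable def N0 {V : Type*} [Fintype V] (G : SimpleGraph V) (u : V) : Finset V :=
  (G.neighborFinset u).filter (fun v => ∀ w ∈ G.neighborFinset u, ¬ G.Adj v w)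

noncomputable def Nplus {V : Type*} [Fintype V] (G : SimpleGraph V) (u : V) : Finset V :=
  G.neighborFinset u \ N0 G u

noncomputable def Wset {V : Type*} [Fintype V] (G : SimpleGraph V) (u : V) : Finset V :=
  Finset.univ \ insert u (G.neighborFinset u)

def InFamily (m : ℕ) {V : Type*} [Fintype V] (G : SimpleGraph V) : Prop :=
  ¬ ContainsCopy gem G ∧ edgeCount G = m ∧ (∀ v : V, ∃ w, G.Adj v w) ∧
    ¬ Nonempty (G ≃g bookS ((m - 1) / 2))

def MaxInFamily (m : ℕ) {V : Type*} [Fintype V] (G : SimpleGraph V) : Prop :=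
  InFamily m G ∧ ∀ (n : ℕ) (H : SimpleGraph (Fin n)), InFamily m H → specRad H ≤ specRad G

def IsCutVertex {V : Type*} (G : SimpleGraph V) (v : V) : Prop :=
  ∃ a b : {x : V // x ≠ v}, G.Reachable a.1 b.1 ∧
    ¬ (G.induce {x : V | x ≠ v}).Reachable a b

lemma adjMatrix_isHermitian {N : ℕ} (G : SimpleGraph (Fin N)) :
    (G.adjMatrix ℝ).IsHermitian := by
  ext i j
  simp [Matrix.conjTranspose_apply, SimpleGraph.adjMatrix_apply, SimpleGraph.adj_comm]

lemma eig_le_card {N : ℕ} (G : SimpleGraph (Fin N)) (μ : ℝ)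
    (h : Module.End.HasEigenvalue (Matrix.mulVecLin (G.adjMatrix ℝ)) μ) : μ ≤ N := by
  obtain ⟨v, hv, hvne⟩ := h.exists_hasEigenvector
  rw [Module.End.mem_eigenspace_iff] at hv
  obtain ⟨j, hj⟩ : ∃ j, v j ≠ 0 := Function.ne_iff.1 hvne
  obtain ⟨i, -, hi⟩ := Finset.exists_max_image Finset.univ (fun i => |v i|)
    ⟨j, Finset.mem_univ j⟩
  have hvi : 0 < |v i| := lt_of_lt_of_le (abs_pos.2 hj) (hi j (Finset.mem_univ j))
  have h1 : (G.adjMatrix ℝ *ᵥ v) i = μ * v i := by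
    have := congrFun hv i
    simpa [Matrix.mulVecLin_apply] using this
  have h2 : |(G.adjMatrix ℝ *ᵥ v) i| ≤ N * |v i| := by
    rw [SimpleGraph.adjMatrix_mulVec_apply]
    calc |∑ w ∈ G.neighborFinset i, v w| ≤ ∑ w ∈ G.neighborFinset i, |v w| :=
          Finset.abs_sum_le_sum_abs _ _
      _ ≤ ∑ _w ∈ G.neighborFinset i, |v i| :=
          Finset.sum_le_sum (fun w _ => hi w (Finset.mem_univ w))
      _ = (G.neighborFinset i).card * |v i| := by rw [Finset.sum_const, nsmul_eq_mul]
      _ ≤ N * |v i| := by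
          have : (G.neighborFinset i).card ≤ N := by
            simpa using Finset.card_le_card (Finset.subset_univ (G.neighborFinset i))
          exact mul_le_mul_of_nonneg_right (by exact_mod_cast this) (abs_nonneg _)
  rw [h1, abs_mul] at h2
  have := le_of_mul_le_mul_right h2 hvi
  exact le_trans (le_abs_self μ) this

lemma specRad_bddAbove {N : ℕ} (G : SimpleGraph (Fin N)) :
    BddAbove {μ : ℝ | Module.End.HasEigenvalue (Matrix.mulVecLin (G.adjMatrix ℝ)) μ} :=
  ⟨N, fun μ hμ => eig_le_card G μ hμ⟩

lemma specRad_rayleigh {N : ℕ} (G : SimpleGraph (Fin N)) (y : Fin N → ℝ) (hy : y ≠ 0)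
    (c : ℝ) (h : c * (y ⬝ᵥ y) < y ⬝ᵥ (G.adjMatrix ℝ *ᵥ y)) : c < specRad G := by
  have hH : (G.adjMatrix ℝ).IsHermitian := adjMatrix_isHermitian G
  have hNpos : 0 < N := by
    rcases Nat.eq_zero_or_pos N with h0 | h0
    · exfalso; apply hy; funext i; exact absurd (i.2.trans_eq h0) (Nat.not_lt_zero _)
    · exact h0
  haveI : Nonempty (Fin N) := ⟨⟨0, hNpos⟩⟩
  set b := hH.eigenvectorBasis with hb
  set μ := hH.eigenvalues with hμ
  -- dot products via the orthonormal basis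
  have hdot : ∀ z : EuclideanSpace ℝ (Fin N), ∀ w : EuclideanSpace ℝ (Fin N),
      (z : Fin N → ℝ) ⬝ᵥ (w : Fin N → ℝ) = ∑ i, ((b i : Fin N → ℝ) ⬝ᵥ z) * ((b i : Fin N → ℝ) ⬝ᵥ w) := by
    intro z w
    have := b.sum_inner_mul_inner z w
    have e1 : ∀ p q : EuclideanSpace ℝ (Fin N), (inner ℝ p q : ℝ) = (p : Fin N → ℝ) ⬝ᵥ q := by
      intro p q
      rw [PiLp.inner_apply]
      simp [dotProduct, mul_comm]
    simp only [e1] at this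
    rw [← this]
    exact Finset.sum_congr rfl (fun i _ => by rw [dotProduct_comm (z : Fin N → ℝ)])
  -- eigen decomposition of the quadratic form
  have hAy : ∀ i, (b i : Fin N → ℝ) ⬝ᵥ (G.adjMatrix ℝ *ᵥ y) = μ i * ((b i : Fin N → ℝ) ⬝ᵥ y) := by
    intro i
    have h0 : (G.adjMatrix ℝ *ᵥ (b i : Fin N → ℝ)) = μ i • (b i : Fin N → ℝ) :=
      hH.mulVec_eigenvectorBasis i
    have h1 : (G.adjMatrix ℝ *ᵥ (b i : Fin N → ℝ)) ⬝ᵥ y = μ i * ((b i : Fin N → ℝ) ⬝ᵥ y) := by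
      rw [h0, smul_dotProduct]
      rfl
    rw [← h1, Matrix.dotProduct_mulVec, ← Matrix.mulVec_transpose]
    rw [show (G.adjMatrix ℝ)ᵀ = G.adjMatrix ℝ from G.transpose_adjMatrix]
  set M : ℝ := Finset.univ.sup' Finset.univ_nonempty μ with hM
  obtain ⟨i0, -, hi0⟩ := Finset.exists_mem_eq_sup' Finset.univ_nonempty μ
  have hMeig : Module.End.HasEigenvalue (Matrix.mulVecLin (G.adjMatrix ℝ)) M := by
    apply Module.End.hasEigenvalue_of_hasEigenvector (x := (b i0 : Fin N → ℝ))
    constructor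
    · rw [Module.End.mem_eigenspace_iff]
      have h0 : (G.adjMatrix ℝ *ᵥ (b i0 : Fin N → ℝ)) = μ i0 • (b i0 : Fin N → ℝ) :=
        hH.mulVec_eigenvectorBasis i0
      show G.adjMatrix ℝ *ᵥ (b i0 : Fin N → ℝ) = M • (b i0 : Fin N → ℝ)
      rw [h0, hM, hi0]
    · intro hz
      exact b.orthonormal.ne_zero i0 (by ext j; exact congrFun hz j)
  have hyy : (0:ℝ) < y ⬝ᵥ y := by
    rcases dotProduct_self_eq_zero (v := y) |>.not.2 hy with h'
    have h0 : 0 ≤ y ⬝ᵥ y := Finset.sum_nonneg (fun i _ => mul_self_nonneg (y i))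
    cases' lt_or_eq_of_le h0 with h1 h1
    · exact h1
    · exact absurd h1.symm h'
  have hq : y ⬝ᵥ (G.adjMatrix ℝ *ᵥ y) ≤ M * (y ⬝ᵥ y) := by
    have h1 := hdot (WithLp.toLp 2 y) (WithLp.toLp 2 (G.adjMatrix ℝ *ᵥ y))
    have h2 := hdot (WithLp.toLp 2 y) (WithLp.toLp 2 y)
    simp only [WithLp.ofLp_toLp] at h1 h2
    rw [h1, h2]
    rw [Finset.mul_sum]
    apply Finset.sum_le_sum
    intro i _
    rw [hAy i]
    have h1 : μ i ≤ M := Finset.le_sup' μ (Finset.mem_univ i)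
    nlinarith [mul_self_nonneg ((b i : Fin N → ℝ) ⬝ᵥ y)]
  have hcM : c < M := by
    by_contra hc
    push_neg at hc
    have := h.trans_le hq
    nlinarith
  have hle : M ≤ specRad G := le_csSup (specRad_bddAbove G) hMeig
  linarith

def Hb (s : ℕ) : SimpleGraph (Fin (s+4)) :=
  SimpleGraph.fromRel (fun a b => a = 0 ∨ (a = 1 ∧ 2 ≤ b.val ∧ b.val ≤ s+1))

lemma Hb_adj (s : ℕ) (a b : Fin (s+4)) :
    (Hb s).Adj a b ↔ a ≠ b ∧ (a = 0 ∨ b = 0 ∨ (a = 1 ∧ 2 ≤ b.val ∧ b.val ≤ s+1) ∨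
      (b = 1 ∧ 2 ≤ a.val ∧ a.val ≤ s+1)) := by
  simp only [Hb, SimpleGraph.fromRel_adj]
  tauto

lemma Fin_eq_iff_val {n : ℕ} (a : Fin (n+4)) : (a = 0 ↔ a.val = 0) ∧ (a = 1 ↔ a.val = 1) := by
  constructor <;> (rw [Fin.ext_iff]; simp)

-- the class finsets
def Cset (s : ℕ) : Finset (Fin (s+4)) := Finset.univ.filter (fun v => 2 ≤ v.val ∧ v.val ≤ s+1)
def Pset (s : ℕ) : Finset (Fin (s+4)) := Finset.univ.filter (fun v => s+2 ≤ v.val)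

lemma card_filter_fin (n : ℕ) (q : ℕ → Prop) :
    (Finset.univ.filter (fun v : Fin n => q v.val)).card
      = ((Finset.range n).filter q).card := by
  rw [Finset.card_filter, Finset.card_filter, ← Fin.sum_univ_eq_sum_range (fun i => if q i then 1 else 0) n]

lemma Cset_card (s : ℕ) : (Cset s).card = s := by
  rw [Cset, Finset.card_filter,
    Fin.sum_univ_eq_sum_range (fun i => if 2 ≤ i ∧ i ≤ s+1 then 1 else 0) (s+4),
    ← Finset.card_filter]
  have : (Finset.range (s+4)).filter (fun v => 2 ≤ v ∧ v ≤ s+1) = Finset.Icc 2 (s+1) := by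
    ext k; simp [Finset.mem_Icc, Finset.mem_range]; omega
  rw [this, Nat.card_Icc]; omega

lemma Pset_card (s : ℕ) : (Pset s).card = 2 := by
  rw [Pset, Finset.card_filter,
    Fin.sum_univ_eq_sum_range (fun i => if s+2 ≤ i then 1 else 0) (s+4),
    ← Finset.card_filter]
  have : (Finset.range (s+4)).filter (fun v => s+2 ≤ v) = {s+2, s+3} := by
    ext k; simp [Finset.mem_range, Finset.mem_insert]; omega
  rw [this, Finset.card_insert_of_notMem (by simp), Finset.card_singleton]

lemma univ_split (s : ℕ) {M : Type*} [AddCommMonoid M] (f : Fin (s+4) → M) :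
    ∑ v, f v = f 0 + f 1 + (∑ v ∈ Cset s, f v + ∑ v ∈ Pset s, f v) := by
  have h1 : (Finset.univ : Finset (Fin (s+4))) = {0, 1} ∪ (Cset s ∪ Pset s) := by
    ext v
    simp only [Finset.mem_univ, Finset.mem_union, Finset.mem_insert, Finset.mem_singleton,
      Cset, Pset, Finset.mem_filter, true_and, true_iff]
    rcases Nat.lt_or_ge v.val 2 with h | h
    · left
      rcases Nat.lt_or_ge v.val 1 with h' | h'
      · left; exact ((Fin_eq_iff_val v).1).2 (by omega)
      · right; exact ((Fin_eq_iff_val v).2).2 (by omega)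
    · right; by_cases h' : v.val ≤ s+1
      · left; exact ⟨h, h'⟩
      · right; omega
  rw [h1, Finset.sum_union, Finset.sum_union, Finset.sum_pair]
  · exact Fin.zero_ne_one
  · rw [Finset.disjoint_left]
    intro a ha hb
    simp only [Cset, Pset, Finset.mem_filter, Finset.mem_union] at ha hb
    omega
  · rw [Finset.disjoint_left]
    intro a ha hb
    simp only [Finset.mem_insert, Finset.mem_singleton] at ha
    simp only [Cset, Pset, Finset.mem_filter, Finset.mem_union, Finset.mem_univ, true_and] at hb
    have h0 := (Fin_eq_iff_val a).1
    have h1 := (Fin_eq_iff_val a).2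
    rcases ha with rfl | rfl <;> simp_all

lemma Hb_nbhd0 (s : ℕ) : (Hb s).neighborFinset 0 = Finset.univ.erase 0 := by
  ext v
  simp only [eq_self_iff_true, true_or, or_true, true_and, and_true, false_and, and_false, or_false, false_or, SimpleGraph.mem_neighborFinset, Hb_adj, Finset.mem_erase, Finset.mem_univ,
    and_true, ne_eq, Fin.ext_iff, Fin.val_zero, Fin.val_one]
  omega

lemma Hb_nbhd1 (s : ℕ) : (Hb s).neighborFinset 1 = insert 0 (Cset s) := by
  ext v
  simp only [eq_self_iff_true, true_or, or_true, true_and, and_true, false_and, and_false, or_false, false_or, SimpleGraph.mem_neighborFinset, Hb_adj, Finset.mem_insert, Cset,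
    Finset.mem_filter, Finset.mem_univ, true_and, ne_eq, Fin.ext_iff, Fin.val_zero, Fin.val_one]
  omega

lemma Hb_nbhdC (s : ℕ) (v : Fin (s+4)) (hv : v ∈ Cset s) :
    (Hb s).neighborFinset v = {0, 1} := by
  simp only [Cset, Finset.mem_filter, Finset.mem_univ, true_and] at hv
  ext w
  simp only [eq_self_iff_true, true_or, or_true, true_and, and_true, false_and, and_false, or_false, false_or, SimpleGraph.mem_neighborFinset, Hb_adj, Finset.mem_insert, Finset.mem_singleton,
    ne_eq, Fin.ext_iff, Fin.val_zero, Fin.val_one]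
  omega

lemma Hb_nbhdP (s : ℕ) (v : Fin (s+4)) (hv : v ∈ Pset s) :
    (Hb s).neighborFinset v = {0} := by
  simp only [Pset, Finset.mem_filter, Finset.mem_univ, true_and] at hv
  ext w
  simp only [eq_self_iff_true, true_or, or_true, true_and, and_true, false_and, and_false, or_false, false_or, SimpleGraph.mem_neighborFinset, Hb_adj, Finset.mem_singleton,
    ne_eq, Fin.ext_iff, Fin.val_zero, Fin.val_one]
  omega

lemma Hb_deg0 (s : ℕ) : (Hb s).degree 0 = s + 3 := by
  rw [← SimpleGraph.card_neighborFinset_eq_degree, Hb_nbhd0]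
  rw [Finset.card_erase_of_mem (Finset.mem_univ _), Finset.card_univ, Fintype.card_fin]
  omega

lemma Hb_deg1 (s : ℕ) : (Hb s).degree 1 = s + 1 := by
  rw [← SimpleGraph.card_neighborFinset_eq_degree, Hb_nbhd1,
    Finset.card_insert_of_notMem, Cset_card]
  simp [Cset]

lemma Hb_degC (s : ℕ) (v : Fin (s+4)) (hv : v ∈ Cset s) : (Hb s).degree v = 2 := by
  rw [← SimpleGraph.card_neighborFinset_eq_degree, Hb_nbhdC s v hv]
  rw [Finset.card_insert_of_notMem (by simp [Fin.ext_iff]), Finset.card_singleton]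

lemma Hb_degP (s : ℕ) (v : Fin (s+4)) (hv : v ∈ Pset s) : (Hb s).degree v = 1 := by
  rw [← SimpleGraph.card_neighborFinset_eq_degree, Hb_nbhdP s v hv, Finset.card_singleton]

lemma Hb_edgeCount (s : ℕ) : edgeCount (Hb s) = 2 * s + 3 := by
  have h := SimpleGraph.sum_degrees_eq_twice_card_edges (Hb s)
  rw [univ_split s (fun v => (Hb s).degree v)] at h
  rw [Hb_deg0, Hb_deg1] at h
  rw [Finset.sum_congr rfl (fun v hv => Hb_degC s v hv)] at h
  rw [Finset.sum_congr rfl (fun v hv => Hb_degP s v hv)] at h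
  rw [Finset.sum_const, Finset.sum_const, Cset_card, Pset_card] at h
  simp only [smul_eq_mul] at h
  have : 2 * edgeCount (Hb s) = 2 * (2 * s + 3) := by rw [edgeCount]; omega
  omega

lemma Hb_key (s : ℕ) (v a b : Fin (s+4)) (h1 : (Hb s).Adj v a) (h2 : (Hb s).Adj v b)
    (h3 : (Hb s).Adj a b) : a = (if v = 0 then 1 else 0) ∨ b = (if v = 0 then 1 else 0) := by
  rw [Hb_adj] at h1 h2 h3
  by_cases hv : v = 0
  · rw [if_pos hv]
    rw [Fin.ext_iff] at hv
    simp only [eq_self_iff_true, true_or, or_true, true_and, and_true, false_and, and_false, or_false, false_or, ne_eq, Fin.ext_iff, Fin.val_zero, Fin.val_one] at h1 h2 h3 hv ⊢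
    omega
  · rw [if_neg hv]
    rw [Fin.ext_iff] at hv
    simp only [eq_self_iff_true, true_or, or_true, true_and, and_true, false_and, and_false, or_false, false_or, ne_eq, Fin.ext_iff, Fin.val_zero, Fin.val_one] at h1 h2 h3 hv ⊢
    omega

lemma gem_adj01 : gem.Adj 0 1 := by
  rw [gem, SimpleGraph.fromRel_adj]
  exact ⟨by decide, Or.inl (Or.inl (by decide))⟩

lemma gem_adj23 : gem.Adj 2 3 := by
  rw [gem, SimpleGraph.fromRel_adj]
  exact ⟨by decide, Or.inl (Or.inl (by decide))⟩

lemma gem_adj4 (i : Fin 5) (hi : i ≠ 4) : gem.Adj i 4 := by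
  rw [gem, SimpleGraph.fromRel_adj]
  exact ⟨hi, Or.inl (Or.inr rfl)⟩

lemma Hb_gemFree (s : ℕ) : ¬ ContainsCopy gem (Hb s) := by
  rintro ⟨f, hf⟩
  have h01 : (Hb s).Adj (f 0) (f 1) := hf 0 1 gem_adj01
  have h23 : (Hb s).Adj (f 2) (f 3) := hf 2 3 gem_adj23
  have h40 : (Hb s).Adj (f 4) (f 0) := ((hf 0 4 (gem_adj4 0 (by decide)))).symm
  have h41 : (Hb s).Adj (f 4) (f 1) := ((hf 1 4 (gem_adj4 1 (by decide)))).symm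
  have h42 : (Hb s).Adj (f 4) (f 2) := ((hf 2 4 (gem_adj4 2 (by decide)))).symm
  have h43 : (Hb s).Adj (f 4) (f 3) := ((hf 3 4 (gem_adj4 3 (by decide)))).symm
  have k1 := Hb_key s (f 4) (f 0) (f 1) h40 h41 h01
  have k2 := Hb_key s (f 4) (f 2) (f 3) h42 h43 h23
  rcases k1 with k1 | k1 <;> rcases k2 with k2 | k2
  · exact absurd (f.injective (k1.trans k2.symm)) (by decide)
  · exact absurd (f.injective (k1.trans k2.symm)) (by decide)
  · exact absurd (f.injective (k1.trans k2.symm)) (by decide)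
  · exact absurd (f.injective (k1.trans k2.symm)) (by decide)

section RayleighHb

variable (s : ℕ) (c : ℝ)

noncomputable def yvec : Fin (s+4) → ℝ :=
  fun v => if v = 0 then c*(c+s+1) else if v = 1 then c*(c+s)
    else if v.val ≤ s+1 then c*(c+1) else (c+s+1)

lemma yvec_0 : yvec s c 0 = c*(c+s+1) := by simp [yvec]

lemma yvec_1 : yvec s c 1 = c*(c+s) := by
  rw [yvec, if_neg (by simp [Fin.ext_iff]), if_pos rfl]

lemma yvec_C (v : Fin (s+4)) (hv : v ∈ Cset s) : yvec s c v = c*(c+1) := by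
  simp only [Cset, Finset.mem_filter, Finset.mem_univ, true_and] at hv
  rw [yvec, if_neg (by rintro rfl; simp at hv), if_neg (by rintro rfl; simp at hv),
    if_pos hv.2]

lemma yvec_P (v : Fin (s+4)) (hv : v ∈ Pset s) : yvec s c v = c+s+1 := by
  simp only [Pset, Finset.mem_filter, Finset.mem_univ, true_and] at hv
  rw [yvec, if_neg (by rintro rfl; simp at hv), if_neg (by rintro rfl; simp at hv),
    if_neg (by omega)]

lemma yvec_sum : ∑ v, yvec s c v = c*(c+s+1) + c*(c+s) + (s*(c*(c+1)) + 2*(c+s+1)) := by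
  have hC : ∀ v ∈ Cset s, yvec s c v = c*(c+1) := fun v hv => yvec_C s c v hv
  have hP : ∀ v ∈ Pset s, yvec s c v = c+s+1 := fun v hv => yvec_P s c v hv
  rw [univ_split s (yvec s c), yvec_0, yvec_1, Finset.sum_congr rfl hC,
    Finset.sum_congr rfl hP, Finset.sum_const, Finset.sum_const, Cset_card, Pset_card]
  simp only [nsmul_eq_mul, Nat.cast_ofNat]
  try ring

lemma yvec_dot : (yvec s c) ⬝ᵥ (yvec s c)
    = (c*(c+s+1))^2 + (c*(c+s))^2 + (s*(c*(c+1))^2 + 2*(c+s+1)^2) := by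
  rw [dotProduct]
  have hC : ∀ v ∈ Cset s, yvec s c v * yvec s c v = (c*(c+1))^2 := by
    intro v hv; rw [yvec_C s c v hv]; ring
  have hP : ∀ v ∈ Pset s, yvec s c v * yvec s c v = (c+s+1)^2 := by
    intro v hv; rw [yvec_P s c v hv]; ring
  rw [univ_split s (fun v => yvec s c v * yvec s c v), yvec_0, yvec_1,
    Finset.sum_congr rfl hC, Finset.sum_congr rfl hP,
    Finset.sum_const, Finset.sum_const, Cset_card, Pset_card]
  simp only [nsmul_eq_mul, Nat.cast_ofNat]
  try ring

lemma yvec_quad : (yvec s c) ⬝ᵥ ((Hb s).adjMatrix ℝ *ᵥ (yvec s c))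
    = (c*(c+s+1)) * (c*(c+s) + s*(c*(c+1)) + 2*(c+s+1))
      + (c*(c+s)) * (c*(c+s+1) + s*(c*(c+1)))
      + (s * ((c*(c+1)) * (c*(c+s+1) + c*(c+s))) + 2 * ((c+s+1) * (c*(c+s+1)))) := by
  rw [dotProduct]
  have hmv : ∀ v, ((Hb s).adjMatrix ℝ *ᵥ (yvec s c)) v
      = ∑ w ∈ (Hb s).neighborFinset v, yvec s c w := fun v =>
    SimpleGraph.adjMatrix_mulVec_apply _ _ _
  rw [univ_split s (fun v => yvec s c v * ((Hb s).adjMatrix ℝ *ᵥ (yvec s c)) v)]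
  have h0 : ∑ w ∈ (Hb s).neighborFinset 0, yvec s c w
      = c*(c+s) + s*(c*(c+1)) + 2*(c+s+1) := by
    rw [Hb_nbhd0]
    have := Finset.add_sum_erase Finset.univ (yvec s c) (Finset.mem_univ 0)
    rw [yvec_sum] at this
    rw [yvec_0] at this
    linarith
  have h1 : ∑ w ∈ (Hb s).neighborFinset 1, yvec s c w = c*(c+s+1) + s*(c*(c+1)) := by
    rw [Hb_nbhd1, Finset.sum_insert (by simp [Cset]), yvec_0,
      Finset.sum_congr rfl (fun v hv => yvec_C s c v hv), Finset.sum_const, Cset_card]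
    simp [nsmul_eq_mul]
  have hC : ∀ v ∈ Cset s, ∑ w ∈ (Hb s).neighborFinset v, yvec s c w
      = c*(c+s+1) + c*(c+s) := by
    intro v hv
    rw [Hb_nbhdC s v hv, Finset.sum_pair Fin.zero_ne_one, yvec_0, yvec_1]
  have hP : ∀ v ∈ Pset s, ∑ w ∈ (Hb s).neighborFinset v, yvec s c w = c*(c+s+1) := by
    intro v hv
    rw [Hb_nbhdP s v hv, Finset.sum_singleton, yvec_0]
  have hC' : ∀ v ∈ Cset s, yvec s c v * ((Hb s).adjMatrix ℝ *ᵥ (yvec s c)) v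
      = (c*(c+1)) * (c*(c+s+1) + c*(c+s)) := by
    intro v hv; rw [hmv v, hC v hv, yvec_C s c v hv]
  have hP' : ∀ v ∈ Pset s, yvec s c v * ((Hb s).adjMatrix ℝ *ᵥ (yvec s c)) v
      = (c+s+1) * (c*(c+s+1)) := by
    intro v hv; rw [hmv v, hP v hv, yvec_P s c v hv]
  rw [hmv 0, hmv 1, h0, h1, yvec_0, yvec_1,
    Finset.sum_congr rfl hC', Finset.sum_congr rfl hP',
    Finset.sum_const, Finset.sum_const, Cset_card, Pset_card]
  simp only [nsmul_eq_mul, Nat.cast_ofNat]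

lemma Hb_specRad_gt (hc2 : c^2 = c + 2*s + 1) (hc5 : 5 < c) : c < specRad (Hb s) := by
  apply specRad_rayleigh (Hb s) (yvec s c) ?_ c
  · rw [yvec_dot, yvec_quad]
    have key : (c*(c+s+1)) * (c*(c+s) + s*(c*(c+1)) + 2*(c+s+1))
      + (c*(c+s)) * (c*(c+s+1) + s*(c*(c+1)))
      + (s * ((c*(c+1)) * (c*(c+s+1) + c*(c+s))) + 2 * ((c+s+1) * (c*(c+s+1))))
      - c * ((c*(c+s+1))^2 + (c*(c+s))^2 + (s*(c*(c+1))^2 + 2*(c+s+1)^2))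
      = c*(c+(s:ℝ)+1) := by
      linear_combination (-(c^3*(s:ℝ) + 2*c^3 + 3*c^2*(s:ℝ) + 2*c^2 + c*(s:ℝ) + c)) * hc2
    nlinarith [key, hc5, Nat.cast_nonneg (α := ℝ) s]
  · intro h
    have h0 := congrFun h 0
    rw [yvec_0] at h0
    simp only [Pi.zero_apply] at h0
    nlinarith [Nat.cast_nonneg (α := ℝ) s]

end RayleighHb

section Gside

variable {V : Type*} [Fintype V] (G : SimpleGraph V) (u : V)

lemma mem_Nplus_iff (w : V) : w ∈ Nplus G u ↔
    w ∈ G.neighborFinset u ∧ ∃ z ∈ G.neighborFinset u, G.Adj w z := by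
  simp only [Nplus, N0, Finset.mem_sdiff, Finset.mem_filter]
  push_neg
  tauto

lemma Nplus_subset : Nplus G u ⊆ G.neighborFinset u := Finset.sdiff_subset

lemma dN_pos (w : V) (hw : w ∈ Nplus G u) :
    1 ≤ (G.neighborFinset w ∩ G.neighborFinset u).card := by
  rw [mem_Nplus_iff] at hw
  obtain ⟨-, z, hz, hadj⟩ := hw
  rw [Nat.one_le_iff_ne_zero, ← Nat.pos_iff_ne_zero, Finset.card_pos]
  exact ⟨z, Finset.mem_inter.2 ⟨(SimpleGraph.mem_neighborFinset _ _ _).2 hadj, hz⟩⟩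

lemma dN_zero (w : V) (hw : w ∈ G.neighborFinset u) (hw' : w ∉ Nplus G u) :
    (G.neighborFinset w ∩ G.neighborFinset u).card = 0 := by
  rw [Finset.card_eq_zero, Finset.eq_empty_iff_forall_notMem]
  intro z hz
  rw [Finset.mem_inter, SimpleGraph.mem_neighborFinset] at hz
  exact hw' ((mem_Nplus_iff G u w).2 ⟨hw, z, hz.2, hz.1⟩)

lemma inter_Nplus (w : V) (hw : w ∈ Nplus G u) :
    G.neighborFinset w ∩ G.neighborFinset u = G.neighborFinset w ∩ Nplus G u := by
  ext z
  simp only [Finset.mem_inter, SimpleGraph.mem_neighborFinset]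
  constructor
  · rintro ⟨h1, h2⟩
    refine ⟨h1, (mem_Nplus_iff G u z).2 ⟨(SimpleGraph.mem_neighborFinset _ _ _).2 h2, w,
      Nplus_subset G u hw, h1.symm⟩⟩
  · rintro ⟨h1, h2⟩
    exact ⟨h1, (SimpleGraph.mem_neighborFinset _ _ _).1 (Nplus_subset G u h2)⟩

/-- the graph induced on `Nplus G u` (as a graph on `V`) -/
def Gplus : SimpleGraph V where
  Adj a b := G.Adj a b ∧ a ∈ Nplus G u ∧ b ∈ Nplus G u
  symm := ⟨by rintro a b ⟨h1, h2, h3⟩; exact ⟨h1.symm, h3, h2⟩⟩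
  loopless := ⟨by rintro a ⟨h1, -⟩; exact G.loopless.irrefl a h1⟩

lemma Gplus_nbhd (a : V) (ha : a ∈ Nplus G u) :
    (Gplus G u).neighborFinset a = G.neighborFinset a ∩ Nplus G u := by
  ext z
  rw [SimpleGraph.mem_neighborFinset]
  simp only [SimpleGraph.mem_neighborFinset, Finset.mem_inter, Gplus]
  tauto

lemma Gplus_nbhd' (a : V) (ha : a ∉ Nplus G u) :
    (Gplus G u).neighborFinset a = ∅ := by
  ext z
  rw [SimpleGraph.mem_neighborFinset]
  simp only [SimpleGraph.mem_neighborFinset, Finset.notMem_empty, iff_false, Gplus]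
  tauto

lemma Gplus_edgeFinset :
    (Gplus G u).edgeFinset = G.edgeFinset.filter (fun e => ∀ v ∈ e, v ∈ Nplus G u) := by
  ext e
  refine Sym2.ind (fun a b => ?_) e
  rw [SimpleGraph.mem_edgeFinset]
  simp only [SimpleGraph.mem_edgeFinset, Finset.mem_filter, SimpleGraph.mem_edgeSet,
    Sym2.mem_iff, Gplus]
  constructor
  · rintro ⟨h1, h2, h3⟩
    exact ⟨h1, by rintro v (rfl | rfl) <;> assumption⟩
  · rintro ⟨h1, h2⟩
    exact ⟨h1, h2 a (Or.inl rfl), h2 b (Or.inr rfl)⟩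

lemma sum_dN_eq : ∑ w ∈ Nplus G u, (G.neighborFinset w ∩ G.neighborFinset u).card
    = 2 * edgesIn G (Nplus G u) := by
  have h := SimpleGraph.sum_degrees_eq_twice_card_edges (Gplus G u)
  have h2 : ∑ v, (Gplus G u).degree v = ∑ w ∈ Nplus G u, (Gplus G u).degree w := by
    refine (Finset.sum_subset (Finset.subset_univ _) ?_).symm
    intro w _ hw
    rw [← SimpleGraph.card_neighborFinset_eq_degree, Gplus_nbhd' G u w hw, Finset.card_empty]
  rw [h2] at h
  have h3 : ∀ w ∈ Nplus G u, (Gplus G u).degree w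
      = (G.neighborFinset w ∩ G.neighborFinset u).card := by
    intro w hw
    rw [← SimpleGraph.card_neighborFinset_eq_degree, Gplus_nbhd G u w hw, inter_Nplus G u w hw]
  rw [Finset.sum_congr rfl h3] at h
  rw [h, edgesIn, Gplus_edgeFinset]

lemma edge_partition :
    (G.neighborFinset u).card + edgesIn G (Nplus G u)
      + (∑ v ∈ G.neighborFinset u, ((G.neighborFinset v) \ insert u (G.neighborFinset u)).card)
      ≤ G.edgeFinset.card := by
  classical
  set E1 := G.edgeFinset.filter (fun e => u ∈ e) with hE1
  set E2 := G.edgeFinset.filter (fun e => ∀ v ∈ e, v ∈ Nplus G u) with hE2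
  have hcard1 : E1.card = (G.neighborFinset u).card := by
    have : E1 = G.incidenceFinset u := by
      ext e
      simp [hE1, SimpleGraph.mem_incidenceFinset, SimpleGraph.incidenceSet,
        SimpleGraph.mem_edgeFinset]
      try tauto
    rw [this, SimpleGraph.card_incidenceFinset_eq_degree]
    rfl
  have hdisj : Disjoint E1 E2 := by
    rw [Finset.disjoint_left]
    intro e he1 he2
    rw [hE1, Finset.mem_filter] at he1
    rw [hE2, Finset.mem_filter] at he2
    have := he2.2 u he1.2
    have := Nplus_subset G u this
    rw [SimpleGraph.mem_neighborFinset] at this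
    exact G.loopless.irrefl u this
  have hsub : E1 ∪ E2 ⊆ G.edgeFinset := by
    intro e he
    rcases Finset.mem_union.1 he with h | h
    · exact (Finset.mem_filter.1 h).1
    · exact (Finset.mem_filter.1 h).1
  -- the cross pairs
  have hK : (∑ v ∈ G.neighborFinset u, ((G.neighborFinset v) \ insert u (G.neighborFinset u)).card)
      ≤ (G.edgeFinset \ (E1 ∪ E2)).card := by
    rw [← Finset.card_sigma]
    apply Finset.card_le_card_of_injOn (fun p => s(p.1, p.2))
    · rintro ⟨v, w⟩ hp
      rw [Finset.mem_coe, Finset.mem_sigma] at hp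
      obtain ⟨hv, hw⟩ := hp
      rw [Finset.mem_sdiff, SimpleGraph.mem_neighborFinset, Finset.mem_insert] at hw
      push_neg at hw
      have hadj := hw.1
      have hwu := hw.2.1
      have hwN := hw.2.2
      rw [Finset.mem_coe, Finset.mem_sdiff]
      constructor
      · rw [SimpleGraph.mem_edgeFinset]
        exact hadj
      · rw [Finset.mem_union]
        push_neg
        constructor
        · rw [hE1, Finset.mem_filter]
          rintro ⟨-, hmem⟩
          rw [Sym2.mem_iff] at hmem
          rcases hmem with rfl | rfl
          · rw [SimpleGraph.mem_neighborFinset] at hv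
            exact G.loopless.irrefl u hv
          · exact hwu rfl
        · rw [hE2, Finset.mem_filter]
          rintro ⟨-, hall⟩
          have := hall w (by rw [Sym2.mem_iff]; right; rfl)
          exact hwN (Nplus_subset G u this)
    · rintro ⟨v, w⟩ hp ⟨v', w'⟩ hp' heq
      rw [Finset.mem_coe, Finset.mem_sigma] at hp hp'
      rw [Sym2.eq_iff] at heq
      rcases heq with ⟨rfl, rfl⟩ | ⟨rfl, rfl⟩
      · rfl
      · exfalso
        obtain ⟨hv, hw⟩ := hp
        rw [Finset.mem_sdiff, Finset.mem_insert] at hw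
        push_neg at hw
        exact hw.2.2 hp'.1
  have htotal : (E1 ∪ E2).card + (G.edgeFinset \ (E1 ∪ E2)).card = G.edgeFinset.card := by
    rw [add_comm, Finset.card_sdiff_add_card_eq_card hsub]
  rw [Finset.card_union_of_disjoint hdisj] at htotal
  have : edgesIn G (Nplus G u) = E2.card := rfl
  omega

end Gside

lemma Hb_inFamily (m s : ℕ) (hms : m = 2*s+3) (hs10 : 10 ≤ s)
    {CC : SimpleGraph (Fin 5)} (hCC : CC = gem)
    {BB : SimpleGraph (Fin 2 ⊕ Fin ((m-1)/2))} (hBB : BB = bookS ((m-1)/2)) :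
    (¬ ContainsCopy CC (Hb s)) ∧ edgeCount (Hb s) = m ∧ (∀ v : Fin (s+4), ∃ w, (Hb s).Adj v w) ∧
      ¬ Nonempty ((Hb s) ≃g BB) := by
  refine ⟨hCC ▸ Hb_gemFree s, by rw [Hb_edgeCount]; omega, ?_, ?_⟩
  · intro v
    by_cases hv : v = 0
    · exact ⟨1, by rw [hv, Hb_adj]; exact ⟨by simp [Fin.ext_iff], Or.inl rfl⟩⟩
    · exact ⟨0, by rw [Hb_adj]; exact ⟨fun h => hv h, Or.inr (Or.inl rfl)⟩⟩
  · rintro ⟨e⟩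
    have hcard := Fintype.card_congr e.toEquiv
    rw [Fintype.card_fin] at hcard
    rw [hBB] at *
    have : Fintype.card (Fin 2 ⊕ Fin ((m-1)/2)) = 2 + (m-1)/2 := by
      rw [Fintype.card_sum, Fintype.card_fin, Fintype.card_fin]
    omega

theorem stmt14 {V : Type*} [Fintype V] (G : SimpleGraph V) (m : ℕ)
    (hodd : Odd m) (hm : 23 ≤ m) (hmax : MaxInFamily m G)
    (x : V → ℝ) (hx : ∀ v, 0 < x v)
    (heig : G.adjMatrix ℝ *ᵥ x = specRad G • x)
    (u : V) (hu : ∀ v, x v ≤ x u)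
    (β : ℝ) (hβ0 : 0 < β) (hβ1 : β < 1)
    (S : Finset V) (hS : S ⊆ Nplus G u)
    (hSx : ∀ v ∈ S, x v < (1 - β) * x u)
    (hSd : ∀ v ∈ S, 2 ≤ (G.neighborFinset v ∩ G.neighborFinset u).card) :
    0 < (edgesIn G (Nplus G u) : ℝ) - (Nplus G u).card + 2 -
      β * ∑ v ∈ S, (((G.neighborFinset v ∩ G.neighborFinset u).card : ℝ) - 1) := by
  classical
  set ρ := specRad G with hρ
  set NN := G.neighborFinset u with hNN
  set PP := Nplus G u with hPP
  -- Step 1 : ρ² - ρ > m - 2 via the pendant book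
  obtain ⟨s, hms, hs10⟩ : ∃ s, m = 2*s+3 ∧ 10 ≤ s := by
    obtain ⟨k, hk⟩ := hodd
    exact ⟨k - 1, by omega, by omega⟩
  set c : ℝ := (1 + Real.sqrt (4*m-7))/2 with hc
  have hsqnn : (0:ℝ) ≤ 4*(m:ℝ)-7 := by
    have : (23:ℝ) ≤ (m:ℝ) := by exact_mod_cast hm
    linarith
  have hsq : Real.sqrt (4*m-7)^2 = 4*(m:ℝ)-7 := Real.sq_sqrt hsqnn
  have hc5 : 5 < c := by
    have h9 : (9:ℝ) < Real.sqrt (4*m-7) := by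
      rw [Real.lt_sqrt (by norm_num)]
      have : (23:ℝ) ≤ (m:ℝ) := by exact_mod_cast hm
      norm_num
      linarith
    rw [hc]; linarith
  have hmc : (m:ℝ) = 2*(s:ℝ)+3 := by exact_mod_cast congrArg (Nat.cast : ℕ → ℝ) hms
  have hc2 : c^2 = c + 2*(s:ℝ) + 1 := by
    rw [hc]
    linear_combination (1/4) * hsq + hmc
  have hρc : c < ρ := by
    have h1 := Hb_specRad_gt s c hc2 hc5
    have h2 := hmax.2 (s+4) (Hb s) (Hb_inFamily m s hms hs10 rfl rfl)
    exact lt_of_lt_of_le h1 h2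
  have hρquad : (m:ℝ) - 2 < ρ^2 - ρ := by
    have h1 : c^2 - c = (m:ℝ) - 2 := by rw [hc2]; linarith
    nlinarith [hρc, hc5]
  -- Step 2 : eigen-equation
  have heq : ∀ v, ρ * x v = ∑ w ∈ G.neighborFinset v, x w := by
    intro v
    have h := congrFun heig v
    rw [SimpleGraph.adjMatrix_mulVec_apply] at h
    exact h.symm
  -- Step 3 : expansion pieces
  have hxu : 0 < x u := hx u
  -- split of neighborhoods
  have hsplit : ∀ v ∈ NN, ∑ w ∈ G.neighborFinset v, x w
      = x u + ((∑ w ∈ G.neighborFinset v ∩ NN, x w)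
          + ∑ w ∈ G.neighborFinset v \ insert u NN, x w) := by
    intro v hv
    have hvu : u ∈ G.neighborFinset v := by
      rw [SimpleGraph.mem_neighborFinset]
      exact ((SimpleGraph.mem_neighborFinset _ _ _).1 hv).symm
    have hset : G.neighborFinset v
        = insert u ((G.neighborFinset v ∩ NN) ∪ (G.neighborFinset v \ insert u NN)) := by
      ext w
      simp only [Finset.mem_insert, Finset.mem_union, Finset.mem_inter, Finset.mem_sdiff,
        Finset.mem_insert]
      constructor
      · intro hw
        by_cases h1 : w = u
        · exact Or.inl h1
        · by_cases h2 : w ∈ NN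
          · exact Or.inr (Or.inl ⟨hw, h2⟩)
          · exact Or.inr (Or.inr ⟨hw, by tauto⟩)
      · rintro (rfl | h | h)
        · exact hvu
        · exact h.1
        · exact h.1
    have hstep : ∑ w ∈ G.neighborFinset v, x w
        = ∑ w ∈ insert u ((G.neighborFinset v ∩ NN) ∪ (G.neighborFinset v \ insert u NN)), x w := by
      rw [← hset]
    rw [hstep, Finset.sum_insert, Finset.sum_union]
    · rw [Finset.disjoint_left]
      rintro a ha hb
      rw [Finset.mem_sdiff, Finset.mem_insert] at hb
      exact hb.2 (Or.inr (Finset.mem_inter.1 ha).2)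
    · rw [Finset.mem_union]
      rintro (h | h)
      · have := (Finset.mem_inter.1 h).2
        rw [hNN, SimpleGraph.mem_neighborFinset] at this
        exact G.loopless.irrefl u this
      · rw [Finset.mem_sdiff, Finset.mem_insert] at h
        exact h.2 (Or.inl rfl)
  have hexp : ρ * (ρ * x u) = NN.card * x u
      + ((∑ v ∈ NN, ∑ w ∈ G.neighborFinset v ∩ NN, x w)
        + ∑ v ∈ NN, ∑ w ∈ G.neighborFinset v \ insert u NN, x w) := by
    rw [heq u, Finset.mul_sum]
    rw [Finset.sum_congr rfl (fun v hv => heq v)]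
    rw [Finset.sum_congr rfl hsplit]
    rw [Finset.sum_add_distrib, Finset.sum_add_distrib, Finset.sum_const, nsmul_eq_mul]
    try ring
  -- the swap
  have hswap : ∑ v ∈ NN, ∑ w ∈ G.neighborFinset v ∩ NN, x w
      = ∑ w ∈ PP, ((G.neighborFinset w ∩ NN).card : ℝ) * x w := by
    have h1 : ∀ v, G.neighborFinset v ∩ NN = NN.filter (fun w => G.Adj v w) := by
      intro v
      ext w
      simp only [Finset.mem_inter, Finset.mem_filter, SimpleGraph.mem_neighborFinset]
      tauto
    have h2 : ∀ w, NN.filter (fun v => G.Adj v w) = G.neighborFinset w ∩ NN := by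
      intro w
      ext v
      simp only [Finset.mem_inter, Finset.mem_filter, SimpleGraph.mem_neighborFinset]
      constructor
      · rintro ⟨hv, ha⟩; exact ⟨ha.symm, hv⟩
      · rintro ⟨ha, hv⟩; exact ⟨hv, ha.symm⟩
    calc ∑ v ∈ NN, ∑ w ∈ G.neighborFinset v ∩ NN, x w
        = ∑ v ∈ NN, ∑ w ∈ NN, if G.Adj v w then x w else 0 := by
          refine Finset.sum_congr rfl (fun v _ => ?_)
          rw [h1 v, Finset.sum_filter]
      _ = ∑ w ∈ NN, ∑ v ∈ NN, if G.Adj v w then x w else 0 := Finset.sum_comm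
      _ = ∑ w ∈ NN, ((G.neighborFinset w ∩ NN).card : ℝ) * x w := by
          refine Finset.sum_congr rfl (fun w _ => ?_)
          rw [← Finset.sum_filter, h2 w, Finset.sum_const, nsmul_eq_mul]
      _ = ∑ w ∈ PP, ((G.neighborFinset w ∩ NN).card : ℝ) * x w := by
          refine (Finset.sum_subset (Nplus_subset G u) ?_).symm
          intro w hw hw'
          rw [hNN, dN_zero G u w hw hw']
          norm_num
  -- cross bound
  have hcross : ∑ v ∈ NN, ∑ w ∈ G.neighborFinset v \ insert u NN, x w
      ≤ ((∑ v ∈ NN, ((G.neighborFinset v) \ insert u NN).card : ℕ) : ℝ) * x u := by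
    rw [Nat.cast_sum, Finset.sum_mul]
    refine Finset.sum_le_sum (fun v _ => ?_)
    have := Finset.sum_le_card_nsmul (G.neighborFinset v \ insert u NN) x (x u)
      (fun w _ => hu w)
    rw [nsmul_eq_mul] at this
    exact this
  -- collapse to Nplus and subtract ρ x_u
  have hPsub : ∑ v ∈ PP, x v ≤ ∑ v ∈ NN, x v :=
    Finset.sum_le_sum_of_subset_of_nonneg (Nplus_subset G u)
      (fun v _ _ => le_of_lt (hx v))
  -- the weighted degree bound
  have hdb : ∑ w ∈ PP, (((G.neighborFinset w ∩ NN).card : ℝ) - 1) * x w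
      ≤ ((2 * edgesIn G PP : ℝ) - PP.card) * x u
        - β * (∑ w ∈ S, (((G.neighborFinset w ∩ NN).card : ℝ) - 1)) * x u := by
    have hsplitS : ∑ w ∈ PP, (((G.neighborFinset w ∩ NN).card : ℝ) - 1) * x w
        = (∑ w ∈ PP \ S, (((G.neighborFinset w ∩ NN).card : ℝ) - 1) * x w)
          + ∑ w ∈ S, (((G.neighborFinset w ∩ NN).card : ℝ) - 1) * x w := by
      rw [Finset.sum_sdiff hS]
    have hd1 : ∀ w ∈ PP, (0:ℝ) ≤ ((G.neighborFinset w ∩ NN).card : ℝ) - 1 := by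
      intro w hw
      have := dN_pos G u w hw
      have : (1:ℝ) ≤ ((G.neighborFinset w ∩ NN).card : ℝ) := by exact_mod_cast this
      linarith
    have hb1 : ∑ w ∈ PP \ S, (((G.neighborFinset w ∩ NN).card : ℝ) - 1) * x w
        ≤ ∑ w ∈ PP \ S, (((G.neighborFinset w ∩ NN).card : ℝ) - 1) * x u := by
      refine Finset.sum_le_sum (fun w hw => ?_)
      exact mul_le_mul_of_nonneg_left (hu w) (hd1 w (Finset.mem_sdiff.1 hw).1)
    have hb2 : ∑ w ∈ S, (((G.neighborFinset w ∩ NN).card : ℝ) - 1) * x w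
        ≤ ∑ w ∈ S, (((G.neighborFinset w ∩ NN).card : ℝ) - 1) * ((1-β) * x u) := by
      refine Finset.sum_le_sum (fun w hw => ?_)
      exact mul_le_mul_of_nonneg_left (le_of_lt (hSx w hw)) (hd1 w (hS hw))
    have hsum2 : (∑ w ∈ PP \ S, (((G.neighborFinset w ∩ NN).card : ℝ) - 1))
        + ∑ w ∈ S, (((G.neighborFinset w ∩ NN).card : ℝ) - 1)
        = (2 * edgesIn G PP : ℝ) - PP.card := by
      rw [Finset.sum_sdiff hS]
      rw [Finset.sum_sub_distrib, Finset.sum_const, nsmul_eq_mul, mul_one]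
      have := sum_dN_eq G u
      have hcast : (∑ w ∈ PP, ((G.neighborFinset w ∩ NN).card : ℝ))
          = ((2 * edgesIn G PP : ℕ) : ℝ) := by
        rw [← this, Nat.cast_sum]
      rw [hcast]
      push_cast
      ring
    calc ∑ w ∈ PP, (((G.neighborFinset w ∩ NN).card : ℝ) - 1) * x w
        = _ + _ := hsplitS
      _ ≤ (∑ w ∈ PP \ S, (((G.neighborFinset w ∩ NN).card : ℝ) - 1) * x u)
          + ∑ w ∈ S, (((G.neighborFinset w ∩ NN).card : ℝ) - 1) * ((1-β) * x u) :=
        add_le_add hb1 hb2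
      _ = ((∑ w ∈ PP \ S, (((G.neighborFinset w ∩ NN).card : ℝ) - 1))
          + ∑ w ∈ S, (((G.neighborFinset w ∩ NN).card : ℝ) - 1)) * x u
          - β * (∑ w ∈ S, (((G.neighborFinset w ∩ NN).card : ℝ) - 1)) * x u := by
        rw [← Finset.sum_mul, ← Finset.sum_mul]
        ring
      _ = ((2 * edgesIn G PP : ℝ) - PP.card) * x u
          - β * (∑ w ∈ S, (((G.neighborFinset w ∩ NN).card : ℝ) - 1)) * x u := by
        rw [hsum2]
  -- edge count
  have hcount : (NN.card : ℝ) + (edgesIn G PP : ℝ)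
      + ((∑ v ∈ NN, ((G.neighborFinset v) \ insert u NN).card : ℕ) : ℝ) ≤ (m : ℝ) := by
    have h := edge_partition G u
    have hm' : G.edgeFinset.card = m := hmax.1.2.1
    rw [hm'] at h
    exact_mod_cast h
  -- final assembly
  set Sg : ℝ := ∑ w ∈ S, (((G.neighborFinset w ∩ NN).card : ℝ) - 1) with hSg
  have hmain : ((m:ℝ) - 2) * x u < ((m:ℝ) + (edgesIn G PP : ℝ) - PP.card - β * Sg) * x u := by
    have e1 : (ρ^2 - ρ) * x u = ρ * (ρ * x u) - ρ * x u := by ring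
    have e2 : ρ * x u = ∑ v ∈ NN, x v := heq u
    calc ((m:ℝ) - 2) * x u < (ρ^2 - ρ) * x u := by
          exact mul_lt_mul_of_pos_right hρquad hxu
      _ = NN.card * x u
          + ((∑ w ∈ PP, ((G.neighborFinset w ∩ NN).card : ℝ) * x w)
            + ∑ v ∈ NN, ∑ w ∈ G.neighborFinset v \ insert u NN, x w)
          - ∑ v ∈ NN, x v := by
          rw [e1, hexp, ← hswap, e2]
      _ ≤ NN.card * x u
          + ((∑ w ∈ PP, ((G.neighborFinset w ∩ NN).card : ℝ) * x w)
            + ∑ v ∈ NN, ∑ w ∈ G.neighborFinset v \ insert u NN, x w)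
          - ∑ v ∈ PP, x v := by linarith [hPsub]
      _ = NN.card * x u
          + ((∑ w ∈ PP, (((G.neighborFinset w ∩ NN).card : ℝ) - 1) * x w)
            + ∑ v ∈ NN, ∑ w ∈ G.neighborFinset v \ insert u NN, x w) := by
          have hrearr : ∑ w ∈ PP, (((G.neighborFinset w ∩ NN).card : ℝ) - 1) * x w
              = (∑ w ∈ PP, ((G.neighborFinset w ∩ NN).card : ℝ) * x w) - ∑ w ∈ PP, x w := by
            rw [← Finset.sum_sub_distrib]
            exact Finset.sum_congr rfl (fun w _ => by ring)
          rw [hrearr]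
          ring
      _ ≤ NN.card * x u
          + ((((2 * edgesIn G PP : ℝ) - PP.card) * x u - β * Sg * x u)
            + ((∑ v ∈ NN, ((G.neighborFinset v) \ insert u NN).card : ℕ) : ℝ) * x u) := by
          have := add_le_add hdb hcross
          linarith
      _ ≤ ((m:ℝ) + (edgesIn G PP : ℝ) - PP.card - β * Sg) * x u := by
          nlinarith [hcount, hxu]
  have hfin : (m:ℝ) - 2 < (m:ℝ) + (edgesIn G PP : ℝ) - PP.card - β * Sg :=
    lt_of_mul_lt_mul_right (by linarith [hmain]) (le_of_lt hxu)
  rw [hSg] at hfin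
  linarith [hfin]
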